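/- Let b be the number of butterflies in a bipartite graph and let b̄ satisfy b/2 ≤ b̄ ≤ 2b, with b ≥ 1 and 0 < ε < 1. Then the number of edges e with b(e) ≥ b̄^{3/4}/(2 ε^{1/4}) is at most 8·8^{1/4}·(εb)^{1/4} < 13.5·(εb)^{1/4}. -/

import Mathlib

open Real

/-- If `Σ_e b(e) = 4b`, `b ≥ 1`, `0 < ε < 1` and `b/2 ≤ b̄ ≤ 2b`, then the number of
edges `e` with `b(e) ≥ b̄^(3/4) / (2 ε^(1/4))` is at most
`8 · 8^(1/4) · (εb)^(1/4) < 13.5 · (εb)^(1/4)`. -/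
theorem card_heavy_butterfly_edges_le {α : Type*} (E : Finset α)
    (bf : α → ℕ) (b : ℕ) (hb : 1 ≤ b)
    (hsum : ∑ e ∈ E, bf e = 4 * b)
    (bbar ε : ℝ) (hε0 : 0 < ε) (hε1 : ε < 1)
    (hlb : (b : ℝ) / 2 ≤ bbar) (hub : bbar ≤ 2 * b) :
    ((E.filter (fun e => bbar ^ ((3 : ℝ)/4) / (2 * ε ^ ((1 : ℝ)/4)) ≤ (bf e : ℝ))).card : ℝ)
        ≤ 8 * 8 ^ ((1 : ℝ)/4) * (ε * b) ^ ((1 : ℝ)/4)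
      ∧ 8 * 8 ^ ((1 : ℝ)/4) * (ε * b) ^ ((1 : ℝ)/4)
        < 13.5 * (ε * b) ^ ((1 : ℝ)/4) := by
  have hb1 : (1:ℝ) ≤ (b:ℝ) := by exact_mod_cast hb
  have hbpos : (0:ℝ) < (b:ℝ) := by linarith
  have hε4 : (0:ℝ) < ε ^ ((1:ℝ)/4) := Real.rpow_pos_of_pos hε0 _
  have hbbarpos : (0:ℝ) < bbar := by linarith
  have hTpos : (0:ℝ) < bbar ^ ((3:ℝ)/4) / (2 * ε ^ ((1:ℝ)/4)) :=
    div_pos (Real.rpow_pos_of_pos hbbarpos _) (by positivity)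
  set T := bbar ^ ((3:ℝ)/4) / (2 * ε ^ ((1:ℝ)/4)) with hT
  set F := E.filter (fun e => T ≤ (bf e : ℝ)) with hF
  -- key counting bound
  have hcard : (F.card : ℝ) * T ≤ 4 * b := by
    have h1 : F.card • T ≤ ∑ e ∈ F, (bf e : ℝ) :=
      Finset.card_nsmul_le_sum F _ T (fun x hx => (Finset.mem_filter.mp hx).2)
    have h2 : ∑ e ∈ F, (bf e : ℝ) ≤ ∑ e ∈ E, (bf e : ℝ) :=
      Finset.sum_le_sum_of_subset_of_nonneg (Finset.filter_subset _ _)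
        (fun i _ _ => by positivity)
    have h3 : ∑ e ∈ E, (bf e : ℝ) = 4 * b := by
      rw [← Nat.cast_sum, hsum]; push_cast; ring
    rw [nsmul_eq_mul] at h1
    linarith
  have hcard' : (F.card : ℝ) ≤ 4 * b / T := (le_div_iff₀ hTpos).mpr hcard
  -- algebra: 4b/T = 8 b ε^(1/4) / bbar^(3/4)
  have hbbar4 : (0:ℝ) < bbar ^ ((3:ℝ)/4) := Real.rpow_pos_of_pos hbbarpos _
  have heq1 : 4 * (b:ℝ) / T = 8 * b * ε ^ ((1:ℝ)/4) / bbar ^ ((3:ℝ)/4) := by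
    rw [hT]; field_simp; ring
  have hb2 : (0:ℝ) < ((b:ℝ)/2) ^ ((3:ℝ)/4) := Real.rpow_pos_of_pos (by linarith) _
  have hmono : ((b:ℝ)/2) ^ ((3:ℝ)/4) ≤ bbar ^ ((3:ℝ)/4) :=
    Real.rpow_le_rpow (by linarith) hlb (by norm_num)
  have hstep : 8 * (b:ℝ) * ε ^ ((1:ℝ)/4) / bbar ^ ((3:ℝ)/4)
      ≤ 8 * b * ε ^ ((1:ℝ)/4) / ((b:ℝ)/2) ^ ((3:ℝ)/4) := by
    apply div_le_div_of_nonneg_left (by positivity) hb2 hmono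
  -- compute the clean value
  have hsplit : ((b:ℝ)/2) ^ ((3:ℝ)/4) = (b:ℝ) ^ ((3:ℝ)/4) / 2 ^ ((3:ℝ)/4) :=
    Real.div_rpow (by linarith) (by norm_num : (0:ℝ) ≤ 2) _
  have hbsplit : (b:ℝ) = (b:ℝ) ^ ((3:ℝ)/4) * (b:ℝ) ^ ((1:ℝ)/4) := by
    rw [← Real.rpow_add hbpos]; norm_num
  have h8 : (8:ℝ) ^ ((1:ℝ)/4) = 2 ^ ((3:ℝ)/4) := by
    rw [show (8:ℝ) = 2 ^ (3:ℝ) by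
      rw [show (3:ℝ) = ((3:ℕ):ℝ) by norm_num, Real.rpow_natCast]; norm_num,
      ← Real.rpow_mul (by norm_num)]
    norm_num
  have hmul : (ε * b) ^ ((1:ℝ)/4) = ε ^ ((1:ℝ)/4) * (b:ℝ) ^ ((1:ℝ)/4) :=
    Real.mul_rpow hε0.le hbpos.le
  have hb34 : (0:ℝ) < (b:ℝ) ^ ((3:ℝ)/4) := Real.rpow_pos_of_pos hbpos _
  have heq2 : 8 * (b:ℝ) * ε ^ ((1:ℝ)/4) / ((b:ℝ)/2) ^ ((3:ℝ)/4)
      = 8 * 8 ^ ((1:ℝ)/4) * (ε * b) ^ ((1:ℝ)/4) := by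
    rw [hsplit, hmul, h8]
    field_simp
    linear_combination hbsplit
  constructor
  · calc (F.card : ℝ) ≤ 4 * b / T := hcard'
      _ = 8 * b * ε ^ ((1:ℝ)/4) / bbar ^ ((3:ℝ)/4) := heq1
      _ ≤ 8 * b * ε ^ ((1:ℝ)/4) / ((b:ℝ)/2) ^ ((3:ℝ)/4) := hstep
      _ = 8 * 8 ^ ((1:ℝ)/4) * (ε * b) ^ ((1:ℝ)/4) := heq2
  · have h84 : (8:ℝ) ^ ((1:ℝ)/4) < 1.6875 := by
      rw [show (1.6875:ℝ) = ((1.6875:ℝ) ^ (4:ℝ)) ^ ((1:ℝ)/4) by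
        rw [← Real.rpow_mul (by norm_num)]; norm_num]
      apply Real.rpow_lt_rpow (by norm_num) _ (by norm_num)
      rw [show (4:ℝ) = ((4:ℕ):ℝ) by norm_num, Real.rpow_natCast]
      norm_num
    have hpos : (0:ℝ) < (ε * b) ^ ((1:ℝ)/4) := Real.rpow_pos_of_pos (by positivity) _
    nlinarith
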